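/- Let X be a real Gaussian random variable with mean a and variance ε ∈ (0,1). Then E[((a/X) - 1)² · 1{X² ≥ ε}] ≤ min(1, 8ε/a²). -/

import Mathlib

open MeasureTheory ProbabilityTheory

section Aux
open Real
open scoped NNReal ENNReal

lemma aux_int {b : ℝ} (hb : 0 < b) (n : ℕ) :
    Integrable (fun x : ℝ => x ^ n * rexp (-b * x ^ 2)) := by
  have h := integrable_rpow_mul_exp_neg_mul_sq hb (s := (n : ℝ))
    (lt_of_lt_of_le neg_one_lt_zero (Nat.cast_nonneg n))
  simpa [Real.rpow_natCast] using h

lemma aux_rec {b : ℝ} (hb : 0 < b) (k : ℕ) :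
    ∫ x : ℝ, x ^ (k + 2) * rexp (-b * x ^ 2)
      = ((k + 1 : ℝ) / (2 * b)) * ∫ x : ℝ, x ^ k * rexp (-b * x ^ 2) := by
  set f : ℝ → ℝ := fun x => x ^ (k + 1) * rexp (-b * x ^ 2) with hf
  set f' : ℝ → ℝ := fun x =>
    (k + 1 : ℝ) * (x ^ k * rexp (-b * x ^ 2)) - (2 * b) * (x ^ (k + 2) * rexp (-b * x ^ 2)) with hf'
  have hderiv : ∀ x, HasDerivAt f (f' x) x := by
    intro x
    have h1 : HasDerivAt (fun y : ℝ => y ^ (k + 1)) ((k + 1 : ℝ) * x ^ k) x := by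
      simpa using hasDerivAt_pow (k + 1) x
    have h2 : HasDerivAt (fun y : ℝ => rexp (-b * y ^ 2)) (rexp (-b * x ^ 2) * (-b * (2 * x))) x := by
      have := ((hasDerivAt_pow 2 x).const_mul (-b)).exp
      simpa using this
    have : HasDerivAt (fun y : ℝ => y ^ (k + 1) * rexp (-b * y ^ 2)) _ x := h1.mul h2
    convert this using 1
    simp only [hf', pow_succ]
    ring
  have hint : Integrable f' :=
    ((aux_int hb k).const_mul _).sub ((aux_int hb (k + 2)).const_mul _)
  have h0 := integral_eq_zero_of_hasDerivAt_of_integrable hderiv hint (aux_int hb (k + 1))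
  rw [hf'] at h0
  rw [integral_sub ((aux_int hb k).const_mul _) ((aux_int hb (k + 2)).const_mul _),
    integral_const_mul, integral_const_mul] at h0
  have hb' : (2 * b) ≠ 0 := by positivity
  rw [div_mul_eq_mul_div, eq_div_iff hb']
  linarith [h0]

lemma integral_gaussianReal_eq {v : ℝ≥0} (hv : v ≠ 0) (a : ℝ) (g : ℝ → ℝ) :
    ∫ x, g x ∂(gaussianReal a v) = ∫ x, g x * gaussianPDFReal a v x := by
  rw [gaussianReal_of_var_ne_zero a hv]
  have hpdf : (gaussianPDF a v)
      = fun x => ((Real.toNNReal (gaussianPDFReal a v x) : ℝ≥0) : ℝ≥0∞) := rfl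
  rw [hpdf, integral_withDensity_eq_integral_smul (measurable_gaussianPDFReal a v).real_toNNReal g]
  congr 1
  ext x
  rw [NNReal.smul_def, smul_eq_mul, Real.coe_toNNReal _ (gaussianPDFReal_nonneg a v x), mul_comm]

lemma integrable_gaussianReal {v : ℝ≥0} (hv : v ≠ 0) (a : ℝ) {g : ℝ → ℝ}
    (h : Integrable (fun x => g x * gaussianPDFReal a v x) volume) :
    Integrable g (gaussianReal a v) := by
  rw [gaussianReal_of_var_ne_zero a hv]
  rw [integrable_withDensity_iff (measurable_gaussianPDF a v)
    (Filter.Eventually.of_forall fun x => ENNReal.ofReal_lt_top)]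
  simpa only [gaussianPDF, ENNReal.toReal_ofReal (gaussianPDFReal_nonneg a v _)] using h

lemma pdf_shift {v : ℝ≥0} (a : ℝ) (n : ℕ) (x : ℝ) :
    (x - a) ^ n * gaussianPDFReal a v x
      = (fun y => y ^ n * rexp (-(2 * (v : ℝ))⁻¹ * y ^ 2) * (√(2 * π * (v : ℝ)))⁻¹) (x - a) := by
  simp only [gaussianPDFReal]
  rw [show -(x - a) ^ 2 / (2 * (v : ℝ)) = -(2 * (v : ℝ))⁻¹ * (x - a) ^ 2 by ring]
  ring

lemma integrable_pow_sub_gaussianReal {v : ℝ≥0} (hv0 : 0 < v) (a : ℝ) (n : ℕ) :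
    Integrable (fun x => (x - a) ^ n) (gaussianReal a v) := by
  have hvr : (0 : ℝ) < v := hv0
  have hb : (0 : ℝ) < (2 * (v : ℝ))⁻¹ := by positivity
  apply integrable_gaussianReal hv0.ne' a
  have : (fun x : ℝ => (x - a) ^ n * gaussianPDFReal a v x)
      = (fun y => y ^ n * rexp (-(2 * (v : ℝ))⁻¹ * y ^ 2) * (√(2 * π * (v : ℝ)))⁻¹) ∘ (· - a) := by
    funext x; exact pdf_shift a n x
  rw [this]
  exact Integrable.comp_sub_right ((aux_int hb n).mul_const _) a

lemma integral_pow_sub_gaussianReal {v : ℝ≥0} (hv0 : 0 < v) (a : ℝ) (n : ℕ) :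
    ∫ x, (x - a) ^ n ∂(gaussianReal a v)
      = (∫ y : ℝ, y ^ n * rexp (-(2 * (v : ℝ))⁻¹ * y ^ 2)) * (√(2 * π * (v : ℝ)))⁻¹ := by
  rw [integral_gaussianReal_eq hv0.ne' a]
  simp_rw [pdf_shift a n]
  rw [integral_sub_right_eq_self
    (fun y => y ^ n * rexp (-(2 * (v : ℝ))⁻¹ * y ^ 2) * (√(2 * π * (v : ℝ)))⁻¹) a,
    integral_mul_const]

lemma sqrt_aux {v : ℝ≥0} (hv0 : 0 < v) :
    √(π / (2 * (v : ℝ))⁻¹) = √(2 * π * (v : ℝ)) := by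
  have hvr : (0 : ℝ) < v := hv0
  congr 1
  field_simp

lemma E2 {v : ℝ≥0} (hv0 : 0 < v) (a : ℝ) :
    ∫ x, (x - a) ^ 2 ∂(gaussianReal a v) = (v : ℝ) := by
  have hvr : (0 : ℝ) < v := hv0
  have hb : (0 : ℝ) < (2 * (v : ℝ))⁻¹ := by positivity
  have hs : (0 : ℝ) < √(2 * π * (v : ℝ)) := Real.sqrt_pos.mpr (by positivity)
  rw [integral_pow_sub_gaussianReal hv0 a 2]
  have h0 : ∫ x : ℝ, x ^ 0 * rexp (-(2 * (v : ℝ))⁻¹ * x ^ 2) = √(2 * π * (v : ℝ)) := by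
    rw [← sqrt_aux hv0]
    simpa using integral_gaussian (2 * (v : ℝ))⁻¹
  have h2 : ∫ x : ℝ, x ^ 2 * rexp (-(2 * (v : ℝ))⁻¹ * x ^ 2)
      = (((0 : ℕ) + 1 : ℝ) / (2 * (2 * (v : ℝ))⁻¹)) * ∫ x : ℝ, x ^ 0 * rexp (-(2 * (v : ℝ))⁻¹ * x ^ 2) :=
    aux_rec hb 0
  rw [h2, h0, show (((0 : ℕ) + 1 : ℝ) / (2 * (2 * (v : ℝ))⁻¹)) = (v : ℝ) by push_cast; field_simp; norm_num,
    mul_assoc, mul_inv_cancel₀ hs.ne', mul_one]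

lemma E4 {v : ℝ≥0} (hv0 : 0 < v) (a : ℝ) :
    ∫ x, (x - a) ^ 4 ∂(gaussianReal a v) = 3 * (v : ℝ) ^ 2 := by
  have hvr : (0 : ℝ) < v := hv0
  have hb : (0 : ℝ) < (2 * (v : ℝ))⁻¹ := by positivity
  have hs : (0 : ℝ) < √(2 * π * (v : ℝ)) := Real.sqrt_pos.mpr (by positivity)
  rw [integral_pow_sub_gaussianReal hv0 a 4]
  have h0 : ∫ x : ℝ, x ^ 0 * rexp (-(2 * (v : ℝ))⁻¹ * x ^ 2) = √(2 * π * (v : ℝ)) := by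
    rw [← sqrt_aux hv0]
    simpa using integral_gaussian (2 * (v : ℝ))⁻¹
  have h2 : ∫ x : ℝ, x ^ 2 * rexp (-(2 * (v : ℝ))⁻¹ * x ^ 2)
      = (((0 : ℕ) + 1 : ℝ) / (2 * (2 * (v : ℝ))⁻¹)) * ∫ x : ℝ, x ^ 0 * rexp (-(2 * (v : ℝ))⁻¹ * x ^ 2) :=
    aux_rec hb 0
  have h4 : ∫ x : ℝ, x ^ 4 * rexp (-(2 * (v : ℝ))⁻¹ * x ^ 2)
      = (((2 : ℕ) + 1 : ℝ) / (2 * (2 * (v : ℝ))⁻¹)) * ∫ x : ℝ, x ^ 2 * rexp (-(2 * (v : ℝ))⁻¹ * x ^ 2) :=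
    aux_rec hb 2
  rw [h4, h2, h0]
  push_cast
  rw [show ((0 : ℝ) + 1) / (2 * (2 * (v : ℝ))⁻¹) = (v : ℝ) by field_simp; norm_num,
    show ((2 : ℝ) + 1) / (2 * (2 * (v : ℝ))⁻¹) = 3 * (v : ℝ) by field_simp; ring]
  field_simp

end Aux

/-- For `X ~ N(a, ε)` with `ε ∈ (0,1)`,
`E[((a/X) - 1)² · 1{X² ≥ ε}] ≤ min(1, 8ε/a²)`. -/
theorem stmt_0 (a : ℝ) (ha : a ≠ 0) (ε : NNReal) (hε0 : 0 < ε) (hε1 : (ε : ℝ) < 1) :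
    ∫ x, ((a / x - 1) ^ 2 * Set.indicator {y : ℝ | (ε : ℝ) ≤ y ^ 2} 1 x)
      ∂(gaussianReal a ε) ≤ min 1 (8 * (ε : ℝ) / a ^ 2) := by
  have hε : (0 : ℝ) < ε := hε0
  have ha2 : (0 : ℝ) < a ^ 2 := by positivity
  set μ := gaussianReal a ε with hμ
  set S : Set ℝ := {y : ℝ | (ε : ℝ) ≤ y ^ 2} with hS
  have hF0 : ∀ x : ℝ, 0 ≤ (a / x - 1) ^ 2 * S.indicator 1 x := fun x =>
    mul_nonneg (sq_nonneg _) (Set.indicator_nonneg (fun _ _ => zero_le_one) x)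
  have hset : ∀ x ∈ S, (a / x - 1) ^ 2 = (x - a) ^ 2 / x ^ 2 := by
    intro x hx
    have hx2 : (ε : ℝ) ≤ x ^ 2 := hx
    have hxne : x ≠ 0 := by
      intro h
      rw [h] at hx2
      simp at hx2
      linarith
    field_simp
    ring
  have hle1 : ∀ x, (a / x - 1) ^ 2 * S.indicator 1 x ≤ (x - a) ^ 2 * (ε : ℝ)⁻¹ := by
    intro x
    by_cases hx : x ∈ S
    · rw [Set.indicator_of_mem hx, Pi.one_apply, mul_one, hset x hx, ← div_eq_mul_inv]
      have hx2 : (ε : ℝ) ≤ x ^ 2 := hx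
      gcongr
    · rw [Set.indicator_of_notMem hx, mul_zero]
      positivity
  have hle2 : ∀ x, (a / x - 1) ^ 2 * S.indicator 1 x
      ≤ (x - a) ^ 2 * (2 / a ^ 2) + (x - a) ^ 4 * (2 / (a ^ 2 * (ε : ℝ))) := by
    intro x
    by_cases hx : x ∈ S
    · rw [Set.indicator_of_mem hx, Pi.one_apply, mul_one, hset x hx]
      have hx2 : (ε : ℝ) ≤ x ^ 2 := hx
      have hx2p : (0 : ℝ) < x ^ 2 := lt_of_lt_of_le hε hx2
      have hxne : x ≠ 0 := by
        intro h
        rw [h] at hx2p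
        simp at hx2p
      have key : (x - a) ^ 2 * a ^ 2 ≤ 2 * (x - a) ^ 2 * x ^ 2 + 2 * (x - a) ^ 4 := by
        nlinarith [mul_nonneg (sq_nonneg (x - a)) (sq_nonneg (x - (a - x)))]
      have step1 : (x - a) ^ 2 / x ^ 2
          ≤ (x - a) ^ 2 * (2 / a ^ 2) + (x - a) ^ 4 * (2 / (a ^ 2 * x ^ 2)) := by
        have h1 : (x - a) ^ 2 / x ^ 2
            ≤ (2 * (x - a) ^ 2 * x ^ 2 + 2 * (x - a) ^ 4) / (a ^ 2 * x ^ 2) := by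
          rw [div_le_div_iff₀ hx2p (by positivity)]
          nlinarith [mul_le_mul_of_nonneg_right key (le_of_lt hx2p)]
        have h2 : (2 * (x - a) ^ 2 * x ^ 2 + 2 * (x - a) ^ 4) / (a ^ 2 * x ^ 2)
            = (x - a) ^ 2 * (2 / a ^ 2) + (x - a) ^ 4 * (2 / (a ^ 2 * x ^ 2)) := by
          field_simp
        linarith [h1, h2.le, h2.ge]
      have step2 : (x - a) ^ 4 * (2 / (a ^ 2 * x ^ 2))
          ≤ (x - a) ^ 4 * (2 / (a ^ 2 * (ε : ℝ))) := by
        gcongr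
      linarith
    · rw [Set.indicator_of_notMem hx, mul_zero]
      positivity
  have hint2 : Integrable (fun x => (x - a) ^ 2) μ := integrable_pow_sub_gaussianReal hε0 a 2
  have hint4 : Integrable (fun x => (x - a) ^ 4) μ := integrable_pow_sub_gaussianReal hε0 a 4
  refine le_min ?_ ?_
  · have hmono := integral_mono_of_nonneg (Filter.Eventually.of_forall hF0)
      (hint2.mul_const ((ε : ℝ)⁻¹)) (Filter.Eventually.of_forall hle1)
    calc ∫ x, (a / x - 1) ^ 2 * S.indicator 1 x ∂μ
        ≤ ∫ x, (x - a) ^ 2 * (ε : ℝ)⁻¹ ∂μ := hmono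
      _ = (ε : ℝ) * (ε : ℝ)⁻¹ := by rw [integral_mul_const, E2 hε0 a]
      _ = 1 := mul_inv_cancel₀ hε.ne'
  · have hmono := integral_mono_of_nonneg (Filter.Eventually.of_forall hF0)
      ((hint2.mul_const _).add (hint4.mul_const _)) (Filter.Eventually.of_forall hle2)
    calc ∫ x, (a / x - 1) ^ 2 * S.indicator 1 x ∂μ
        ≤ ∫ x, ((x - a) ^ 2 * (2 / a ^ 2) + (x - a) ^ 4 * (2 / (a ^ 2 * (ε : ℝ)))) ∂μ := hmono
      _ = (ε : ℝ) * (2 / a ^ 2) + 3 * (ε : ℝ) ^ 2 * (2 / (a ^ 2 * (ε : ℝ))) := by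
          rw [integral_add (hint2.mul_const _) (hint4.mul_const _), integral_mul_const,
            integral_mul_const, E2 hε0 a, E4 hε0 a]
      _ = 8 * (ε : ℝ) / a ^ 2 := by field_simp; ring
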